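/- In the setting of the previous theorem, suppose additionally that the cocycle Φ is strongly contracting inside the absorbing set B, i.e., there exist constants α > 0 and C ≥ 1 such that d_X(Φ(t,p,x), Φ(t,p,y)) ≤ C e^{−αt} d_X(x,y) for all x, y ∈ B, p ∈ P, t ≥ 0. Then each fiber of the pullback attractor is a singleton, A_p = {a*(p)}, and the map p ↦ a*(p) is continuous from P to X. -/

import Mathlib

open Set Filter Topology

/-- Singleton pullback attractor under strong contraction: if, in addition to the
absorbing-set hypotheses, the cocycle is strongly contracting inside the forward
invariant compact absorbing set `B`, then each fiber
`A_p = ⋂_{τ ≥ 0} closure (⋃_{t > τ} Φ(t, θ_{−t} p, B))` of the pullback attractor is a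
singleton `{a*(p)}`, and `p ↦ a*(p)` is continuous. -/
theorem pullback_attractor_singleton_of_contraction
    {X P : Type*} [MetricSpace X] [CompleteSpace X] [MetricSpace P]
    (Φ : ℝ → P → X → X) (θ : ℝ → P → P)
    (hθ0 : ∀ p, θ 0 p = p) (hθadd : ∀ s t p, θ (s + t) p = θ s (θ t p))
    (hθc : ∀ t, Continuous (θ t))
    (hΦc : ∀ t, 0 ≤ t → Continuous (fun q : P × X => Φ t q.1 q.2))
    (hΦ0 : ∀ p x, Φ 0 p x = x)
    (hΦcoc : ∀ τ t : ℝ, 0 ≤ τ → 0 ≤ t → ∀ p x, Φ (τ + t) p x = Φ τ (θ t p) (Φ t p x))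
    (B : Set X) (hBne : B.Nonempty) (hBcpt : IsCompact B)
    (habs : ∀ D : Set X, D.Nonempty → IsCompact D →
      ∃ T : ℝ, 0 ≤ T ∧ ∀ t, T < t → ∀ p, Φ t p '' D ⊆ B)
    -- B is forward invariant
    (hBinv : ∀ t, 0 ≤ t → ∀ p, Φ t p '' B ⊆ B)
    -- strong contraction inside B
    (α C : ℝ) (hα : 0 < α) (hC : 1 ≤ C)
    (hcontr : ∀ t, 0 ≤ t → ∀ p, ∀ x ∈ B, ∀ y ∈ B,
      dist (Φ t p x) (Φ t p y) ≤ C * Real.exp (-α * t) * dist x y) :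
    ∃ a : P → X, Continuous a ∧
      ∀ p, (⋂ τ ∈ Set.Ici (0:ℝ), closure (⋃ t ∈ Set.Ioi τ, Φ t (θ (-t) p) '' B)) = {a p} := by
  obtain ⟨b₀, hb₀⟩ := hBne
  set K := C * Metric.diam B with hK
  have hK0 : 0 ≤ K := mul_nonneg (by linarith) Metric.diam_nonneg
  have hΦcont : ∀ t : ℝ, 0 ≤ t → ∀ p, Continuous (fun x => Φ t p x) := fun t ht p =>
    (hΦc t ht).comp (continuous_const.prodMk continuous_id)
  -- key decomposition
  have key : ∀ (n : ℕ) (t : ℝ), (n:ℝ) ≤ t → ∀ p, ∀ b ∈ B,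
      ∃ b' ∈ B, Φ t (θ (-t) p) b = Φ (n:ℝ) (θ (-(n:ℝ)) p) b' := by
    intro n t hnt p b hb
    refine ⟨Φ (t - n) (θ (-t) p) b, hBinv _ (by linarith) _ ⟨b, hb, rfl⟩, ?_⟩
    have h1 : Φ ((n:ℝ) + (t - n)) (θ (-t) p) b
        = Φ (n:ℝ) (θ (t - n) (θ (-t) p)) (Φ (t - n) (θ (-t) p) b) :=
      hΦcoc n (t - n) n.cast_nonneg (by linarith) _ _
    have h2 : θ (t - n) (θ (-t) p) = θ (-(n:ℝ)) p := by
      rw [← hθadd]; ring_nf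
    have h3 : (n:ℝ) + (t - n) = t := by ring
    rw [h3, h2] at h1
    exact h1
  set f : ℕ → P → X := fun n p => Φ (n:ℝ) (θ (-(n:ℝ)) p) b₀ with hf
  have hbound : ∀ (n : ℕ) (t : ℝ), (n:ℝ) ≤ t → ∀ p, ∀ x ∈ B,
      dist (Φ t (θ (-t) p) x) (f n p) ≤ K * Real.exp (-α * n) := by
    intro n t hnt p x hx
    obtain ⟨b', hb', heq⟩ := key n t hnt p x hx
    rw [heq]
    calc dist (Φ (n:ℝ) (θ (-(n:ℝ)) p) b') (f n p)
        ≤ C * Real.exp (-α * n) * dist b' b₀ :=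
          hcontr _ n.cast_nonneg _ _ hb' _ hb₀
      _ ≤ C * Real.exp (-α * n) * Metric.diam B :=
          mul_le_mul_of_nonneg_left (Metric.dist_le_diam_of_mem hBcpt.isBounded hb' hb₀)
            (by positivity)
      _ = K * Real.exp (-α * n) := by ring
  have hKtend : Tendsto (fun n : ℕ => K * Real.exp (-α * n)) atTop (𝓝 0) := by
    rw [show (0:ℝ) = K * 0 by ring]
    refine Tendsto.const_mul K (Real.tendsto_exp_atBot.comp ?_)
    have h1 : Tendsto (fun n : ℕ => (n:ℝ)) atTop atTop := tendsto_natCast_atTop_atTop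
    have := h1.const_mul_atTop_of_neg (by linarith : -α < 0)
    exact this
  have hmono : ∀ (N n : ℕ), N ≤ n → K * Real.exp (-α * n) ≤ K * Real.exp (-α * N) := by
    intro N n hNn
    have h1 : (N:ℝ) ≤ n := Nat.cast_le.mpr hNn
    exact mul_le_mul_of_nonneg_left (Real.exp_le_exp.mpr (by nlinarith)) hK0
  have hcauchy : ∀ p, ∃ x, Tendsto (fun n => f n p) atTop (𝓝 x) := by
    intro p
    have hc : CauchySeq (fun n => f n p) := by
      apply cauchySeq_of_le_tendsto_0 (fun N : ℕ => K * Real.exp (-α * N)) _ hKtend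
      intro n m N hn hm
      rcases le_total n m with h | h
      · rw [dist_comm]
        calc dist (f m p) (f n p) ≤ K * Real.exp (-α * n) :=
              hbound n m (Nat.cast_le.mpr h) p b₀ hb₀
          _ ≤ K * Real.exp (-α * N) := hmono N n hn
      · calc dist (f n p) (f m p) ≤ K * Real.exp (-α * m) :=
              hbound m n (Nat.cast_le.mpr h) p b₀ hb₀
          _ ≤ K * Real.exp (-α * N) := hmono N m hm
    exact cauchySeq_tendsto_of_complete hc
  choose a ha using hcauchy
  have hdista : ∀ (n : ℕ) p, dist (f n p) (a p) ≤ K * Real.exp (-α * n) := by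
    intro n p
    have h1 : Tendsto (fun m => dist (f n p) (f m p)) atTop (𝓝 (dist (f n p) (a p))) :=
      tendsto_const_nhds.dist (ha p)
    refine le_of_tendsto h1 ?_
    filter_upwards [eventually_ge_atTop n] with m hm
    rw [dist_comm]
    exact hbound n m (Nat.cast_le.mpr hm) p b₀ hb₀
  have hfc : ∀ n : ℕ, Continuous (f n) := by
    intro n
    exact (hΦc (n:ℝ) n.cast_nonneg).comp ((hθc (-(n:ℝ))).prodMk continuous_const)
  have hunif : TendstoUniformly f a atTop := by
    rw [Metric.tendstoUniformly_iff]
    intro ε hε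
    filter_upwards [hKtend.eventually (gt_mem_nhds hε)] with n hn p
    calc dist (a p) (f n p) = dist (f n p) (a p) := dist_comm _ _
      _ ≤ K * Real.exp (-α * n) := hdista n p
      _ < ε := hn
  have hacont : Continuous a := hunif.continuous (Eventually.of_forall hfc).frequently
  refine ⟨a, hacont, fun p => ?_⟩
  have himg_closed : ∀ n : ℕ, IsClosed (Φ (n:ℝ) (θ (-(n:ℝ)) p) '' B) := fun n =>
    (hBcpt.image (hΦcont (n:ℝ) n.cast_nonneg _)).isClosed
  have ha_mem_img : ∀ n : ℕ, a p ∈ Φ (n:ℝ) (θ (-(n:ℝ)) p) '' B := by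
    intro n
    apply (himg_closed n).mem_of_tendsto (ha p)
    filter_upwards [eventually_ge_atTop n] with m hm
    obtain ⟨b', hb', heq⟩ := key n m (Nat.cast_le.mpr hm) p b₀ hb₀
    exact ⟨b', hb', heq.symm⟩
  rw [Set.eq_singleton_iff_unique_mem]
  constructor
  · simp only [mem_iInter]
    intro τ hτ
    apply mem_closure_of_tendsto (ha p)
    filter_upwards [eventually_gt_atTop ⌈τ⌉₊] with m hm
    refine mem_iUnion₂.mpr ⟨(m:ℝ), ?_, ⟨b₀, hb₀, rfl⟩⟩
    exact lt_of_le_of_lt (Nat.le_ceil τ) (Nat.cast_lt.mpr hm)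
  · intro x hx
    simp only [mem_iInter] at hx
    have hx' : ∀ n : ℕ, x ∈ Φ (n:ℝ) (θ (-(n:ℝ)) p) '' B := by
      intro n
      have hτ : (n:ℝ) ∈ Set.Ici (0:ℝ) := mem_Ici.mpr n.cast_nonneg
      have h1 : x ∈ closure (⋃ t ∈ Set.Ioi (n:ℝ), Φ t (θ (-t) p) '' B) := hx (n:ℝ) hτ
      have hsub : (⋃ t ∈ Set.Ioi (n:ℝ), Φ t (θ (-t) p) '' B)
          ⊆ Φ (n:ℝ) (θ (-(n:ℝ)) p) '' B := by
        intro y hy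
        obtain ⟨t, ht, b, hb, rfl⟩ := by
          simpa only [mem_iUnion, mem_image, exists_prop] using hy
        obtain ⟨b', hb', heq⟩ := key n t (le_of_lt ht) p b hb
        exact ⟨b', hb', heq.symm⟩
      exact closure_minimal hsub (himg_closed n) h1
    have hdist : ∀ n : ℕ, dist x (a p) ≤ K * Real.exp (-α * n) := by
      intro n
      obtain ⟨bx, hbx, hex⟩ := hx' n
      obtain ⟨ba, hba, hea⟩ := ha_mem_img n
      rw [← hex, ← hea]
      calc dist (Φ (n:ℝ) (θ (-(n:ℝ)) p) bx) (Φ (n:ℝ) (θ (-(n:ℝ)) p) ba)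
          ≤ C * Real.exp (-α * n) * dist bx ba :=
            hcontr _ n.cast_nonneg _ _ hbx _ hba
        _ ≤ C * Real.exp (-α * n) * Metric.diam B :=
            mul_le_mul_of_nonneg_left (Metric.dist_le_diam_of_mem hBcpt.isBounded hbx hba)
              (by positivity)
        _ = K * Real.exp (-α * n) := by ring
    have hle : dist x (a p) ≤ 0 := ge_of_tendsto' hKtend hdist
    exact dist_le_zero.mp hle
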